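/- Let G = (V, E) be a graph, σ = v_1,…,v_n an ordering of V, and suppose there exists a pairwise compatibility representation of G on the star T_V with center v* and leaves v_1,…,v_n, with leaf-edge weights w_1 ≤ w_2 ≤ ⋯ ≤ w_n and bounds d_min ≤ d_max (so v_i v_j ∈ E iff d_min ≤ w_i + w_j ≤ d_max). Then σ is gap-free: no pair {v_i, v_j} with i < j, v_i v_j ∉ E, satisfies any of the conditions (g1), (g2), (g3). -/
import Mathlib


/-- Gap condition (g1) for the index pair `(i,j)` under ordering `σ`. -/
def GapG1 {V : Type*} {n : ℕ} (G : SimpleGraph V) (σ : Fin n ≃ V) (i j : Fin n) : Prop :=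
  (∃ j' j'' : Fin n, j' < j ∧ j < j'' ∧ G.Adj (σ i) (σ j') ∧ G.Adj (σ i) (σ j'')) ∨
  (∃ i' i'' : Fin n, i' < i ∧ i < i'' ∧ G.Adj (σ i') (σ j) ∧ G.Adj (σ i'') (σ j))

/-- Gap condition (g2). -/
def GapG2 {V : Type*} {n : ℕ} (G : SimpleGraph V) (σ : Fin n ≃ V) (i j : Fin n) : Prop :=
  ∃ i' j' : Fin n, j' < i ∧ j < i' ∧ G.Adj (σ i) (σ i') ∧ G.Adj (σ j') (σ j)

/-- Gap condition (g3). -/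
def GapG3 {V : Type*} {n : ℕ} (G : SimpleGraph V) (σ : Fin n ≃ V) (i j : Fin n) : Prop :=
  ∃ i' j' : Fin n, i' < j ∧ i < j' ∧ G.Adj (σ i) (σ i') ∧ G.Adj (σ j) (σ j')

/-- `σ` is a gap-free ordering of the vertices of `G`: no non-adjacent pair
satisfies any of (g1), (g2), (g3). -/
def GapFree {V : Type*} {n : ℕ} (G : SimpleGraph V) (σ : Fin n ≃ V) : Prop :=
  ∀ i j : Fin n, i < j → ¬ G.Adj (σ i) (σ j) →
    ¬ (GapG1 G σ i j ∨ GapG2 G σ i j ∨ GapG3 G σ i j)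

/-- If `G` has a pairwise compatibility representation on a star with sorted leaf-edge
weights `w₁ ≤ ⋯ ≤ wₙ` (so `vᵢvⱼ ∈ E ↔ d_min ≤ wᵢ + wⱼ ≤ d_max`), then the
corresponding ordering `σ` is gap-free. -/
theorem star_representation_implies_gapFree
    {V : Type*} {n : ℕ} (G : SimpleGraph V) (σ : Fin n ≃ V)
    (w : Fin n → ℝ) (hw : Monotone w)
    (dmin dmax : ℝ) (hd : dmin ≤ dmax)
    (hrep : ∀ i j : Fin n, i ≠ j →
      (G.Adj (σ i) (σ j) ↔ (dmin ≤ w i + w j ∧ w i + w j ≤ dmax))) :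
    GapFree G σ := by

  intro i j hij hnadj hgap
  have hne : i ≠ j := ne_of_lt hij
  have ane : ∀ a b : Fin n, G.Adj (σ a) (σ b) → a ≠ b := by
    intro a b h e; exact h.ne (by rw [e])
  have key : ∀ a b : Fin n, G.Adj (σ a) (σ b) → dmin ≤ w a + w b ∧ w a + w b ≤ dmax := by
    intro a b h; exact (hrep a b (ane a b h)).mp h
  apply hnadj
  rw [hrep i j hne]
  rcases hgap with (⟨j', j'', h1, h2, ha, hb⟩ | ⟨i', i'', h1, h2, ha, hb⟩) |
    ⟨i', j', h1, h2, ha, hb⟩ | ⟨i', j', h1, h2, ha, hb⟩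
  · obtain ⟨l1, _⟩ := key i j' ha
    obtain ⟨_, r2⟩ := key i j'' hb
    constructor
    · linarith [hw h1.le]
    · linarith [hw h2.le]
  · obtain ⟨l1, _⟩ := key i' j ha
    obtain ⟨_, r2⟩ := key i'' j hb
    constructor
    · linarith [hw h1.le]
    · linarith [hw h2.le]
  · obtain ⟨_, r1⟩ := key i i' ha
    obtain ⟨l2, _⟩ := key j' j hb
    constructor
    · linarith [hw h1.le]
    · linarith [hw h2.le]
  · obtain ⟨_, r1⟩ := key i i' ha
    obtain ⟨_, r2⟩ := key j j' hb
    constructor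
    · linarith [hw h1.le]
    · linarith [hw h2.le]
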